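/- Let S = k[x₁, …, xₙ] be a polynomial ring over a field k with homogeneous maximal ideal 𝔪 = (x₁, …, xₙ). Let I and J be ideals of S with I ∩ J ⊆ 𝔪J, and let s ≥ 0 be an integer. If J ∩ 𝔪^{s+1}I = 𝔪^{s}(I ∩ J), then 𝔪^{s+1}I ∩ 𝔪^{s+1}J = 𝔪^{s}(I ∩ J). -/

import Mathlib

open MvPolynomial

theorem pow_mul_inter_pow_mul {k : Type*} [Field k] {n : ℕ}
    (I J : Ideal (MvPolynomial (Fin n) k)) (s : ℕ)
    (hIJ : I ⊓ J ≤ Ideal.span (Set.range (X : Fin n → MvPolynomial (Fin n) k)) * J)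
    (h : J ⊓ Ideal.span (Set.range (X : Fin n → MvPolynomial (Fin n) k)) ^ (s + 1) * I =
      Ideal.span (Set.range (X : Fin n → MvPolynomial (Fin n) k)) ^ s * (I ⊓ J)) :
    Ideal.span (Set.range (X : Fin n → MvPolynomial (Fin n) k)) ^ (s + 1) * I ⊓
        Ideal.span (Set.range (X : Fin n → MvPolynomial (Fin n) k)) ^ (s + 1) * J =
      Ideal.span (Set.range (X : Fin n → MvPolynomial (Fin n) k)) ^ s * (I ⊓ J) := by
  set m := Ideal.span (Set.range (X : Fin n → MvPolynomial (Fin n) k)) with hm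
  apply le_antisymm
  · calc m ^ (s + 1) * I ⊓ m ^ (s + 1) * J ≤ m ^ (s + 1) * I ⊓ J :=
          inf_le_inf_left _ Ideal.mul_le_right
      _ = m ^ s * (I ⊓ J) := by rw [inf_comm]; exact h
  · refine le_inf ?_ ?_
    · rw [← h]; exact inf_le_right
    · calc m ^ s * (I ⊓ J) ≤ m ^ s * (m * J) := Ideal.mul_mono_right hIJ
        _ = m ^ (s + 1) * J := by rw [← mul_assoc, ← pow_succ]
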